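/- Let 0 < λ ≤ 1 and let g_i ∈ (d_−, d_+) be defined by i/n = ∫_{g_i}^{d_+} p(x) dx where p is the Marčenko–Pastur density with parameter λ. Then for i ≤ n/2, g_i = d_+ − (3π λ^{3/4} d_+ i / (2n))^{2/3} + O((i/n)^{4/3}), uniformly in i. -/

import Mathlib

open Real

/-- Marčenko–Pastur density. -/
noncomputable def pMP (l x : ℝ) : ℝ :=
  Real.sqrt (((1 + Real.sqrt l) ^ 2 - x) * (x - (1 - Real.sqrt l) ^ 2)) /
    (2 * Real.pi * l * x)

lemma cube_abs_aux (r s : ℝ) (hr : 0 ≤ r) (hs : 0 ≤ s) :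
    Real.sqrt s * |r - s| ≤ 2 * |r * Real.sqrt r - s * Real.sqrt s| := by
  set A := Real.sqrt r with hA
  set B := Real.sqrt s with hB
  have hA0 : 0 ≤ A := Real.sqrt_nonneg r
  have hB0 : 0 ≤ B := Real.sqrt_nonneg s
  have hA2 : A ^ 2 = r := Real.sq_sqrt hr
  have hB2 : B ^ 2 = s := Real.sq_sqrt hs
  rw [← hA2, ← hB2]
  rcases le_total A B with h | h
  · rw [abs_of_nonpos (by nlinarith), abs_of_nonpos (by nlinarith [pow_le_pow_left₀ hA0 h 3])]
    nlinarith [mul_nonneg (sub_nonneg.2 h) (by nlinarith [mul_nonneg hA0 hB0] : (0:ℝ) ≤ 2*A^2 + A*B + B^2)]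
  · rw [abs_of_nonneg (by nlinarith), abs_of_nonneg (by nlinarith [pow_le_pow_left₀ hB0 h 3])]
    nlinarith [mul_nonneg (sub_nonneg.2 h) (by nlinarith [mul_nonneg hA0 hB0] : (0:ℝ) ≤ 2*A^2 + A*B + B^2)]

lemma rpow_three_halves (s : ℝ) (hs : 0 ≤ s) : s ^ ((3:ℝ)/2) = s * Real.sqrt s := by
  rcases hs.eq_or_lt with h0 | h0
  · simp [← h0, Real.zero_rpow]
  · rw [show (3:ℝ)/2 = 1 + 1/2 by norm_num, Real.rpow_add h0, Real.rpow_one,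
      ← Real.sqrt_eq_rpow]

lemma rpow_five_halves (s : ℝ) (hs : 0 ≤ s) : s ^ ((5:ℝ)/2) = s^2 * Real.sqrt s := by
  rcases hs.eq_or_lt with h0 | h0
  · rw [← h0, Real.zero_rpow (by norm_num : ((5:ℝ)/2) ≠ 0)]
    simp
  · rw [show (5:ℝ)/2 = 2 + 1/2 by norm_num, Real.rpow_add h0, ← Real.sqrt_eq_rpow]
    have h2 : s ^ ((2:ℝ)) = s ^ (2:ℕ) := by
      rw [← Real.rpow_natCast s 2]; norm_num
    rw [h2]

lemma integral_sqrt_zero' (s : ℝ) (hs : 0 ≤ s) :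
    ∫ x in (0:ℝ)..s, Real.sqrt x = 2/3 * (s * Real.sqrt s) := by
  have h : ∫ x in (0:ℝ)..s, x ^ ((1:ℝ)/2) = (s ^ ((1:ℝ)/2 + 1) - 0 ^ ((1:ℝ)/2 + 1)) / ((1:ℝ)/2 + 1) :=
    integral_rpow (Or.inl (by norm_num))
  rw [show (fun x : ℝ => Real.sqrt x) = fun x : ℝ => x ^ ((1:ℝ)/2) from funext fun x => Real.sqrt_eq_rpow x]
  rw [h, Real.zero_rpow (by norm_num), show (1:ℝ)/2 + 1 = 3/2 by norm_num,
    rpow_three_halves s hs]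
  ring

lemma integral_mul_sqrt_zero' (s : ℝ) (hs : 0 ≤ s) :
    ∫ x in (0:ℝ)..s, x * Real.sqrt x = 2/5 * (s^2 * Real.sqrt s) := by
  have h : ∫ x in (0:ℝ)..s, x ^ ((3:ℝ)/2) = (s ^ ((3:ℝ)/2 + 1) - 0 ^ ((3:ℝ)/2 + 1)) / ((3:ℝ)/2 + 1) :=
    integral_rpow (Or.inl (by norm_num))
  have hcongr : ∫ x in (0:ℝ)..s, x * Real.sqrt x = ∫ x in (0:ℝ)..s, x ^ ((3:ℝ)/2) := by
    apply intervalIntegral.integral_congr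
    intro x hx
    rw [Set.uIcc_of_le hs] at hx
    exact (rpow_three_halves x hx.1).symm
  rw [hcongr, h, Real.zero_rpow (by norm_num), show (3:ℝ)/2 + 1 = 5/2 by norm_num,
    rpow_five_halves s hs]
  ring

lemma integral_sqrt_sub (g d : ℝ) (h : g ≤ d) :
    ∫ x in g..d, Real.sqrt (d - x) = 2/3 * ((d - g) * Real.sqrt (d - g)) := by
  have := intervalIntegral.integral_comp_sub_left (a := g) (b := d) (fun u => Real.sqrt u) d
  rw [this, sub_self]
  exact integral_sqrt_zero' _ (by linarith)

lemma integral_mul_sqrt_sub (g d : ℝ) (h : g ≤ d) :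
    ∫ x in g..d, (d - x) * Real.sqrt (d - x) = 2/5 * ((d - g)^2 * Real.sqrt (d - g)) := by
  have := intervalIntegral.integral_comp_sub_left (a := g) (b := d) (fun u => u * Real.sqrt u) d
  rw [this, sub_self]
  exact integral_mul_sqrt_zero' _ (by linarith)


lemma mp_pointwise (l sD x : ℝ) (hl0 : 0 < l) (hsl1 : Real.sqrt l ≤ 1)
    (hsD : 0 < sD) (hsD2 : sD^2 = 4*Real.sqrt l)
    (hx1 : 1 ≤ x) (hx2 : x ≤ (1 + Real.sqrt l)^2) :
    |pMP l x - (sD/(2*π*l*(1 + Real.sqrt l)^2)) * Real.sqrt ((1 + Real.sqrt l)^2 - x)|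
      ≤ (1/(2*π*l*sD)) * (((1 + Real.sqrt l)^2 - x) * Real.sqrt ((1 + Real.sqrt l)^2 - x)) := by
  have hpi := Real.pi_pos
  set sl := Real.sqrt l with hsl_def
  have hsl : 0 < sl := Real.sqrt_pos.2 hl0
  have hsl2 : sl^2 = l := Real.sq_sqrt hl0.le
  set dp := (1 + sl)^2 with hdp_def
  set dm := (1 - sl)^2 with hdm_def
  have hdp0 : (0:ℝ) < dp := by positivity
  have hdm0 : (0:ℝ) ≤ dm := sq_nonneg _
  have hD : dp - dm = 4*sl := by rw [hdp_def, hdm_def]; ring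
  have hdm_le : dm ≤ dp := by linarith
  have hx0 : (0:ℝ) < x := by linarith
  have hxdm : dm ≤ x := by
    have : dm ≤ 1 := by rw [hdm_def]; nlinarith
    linarith
  have hu0 : (0:ℝ) ≤ dp - x := by linarith
  set a := Real.sqrt (dp - x) with ha_def
  set b := Real.sqrt (x - dm) with hb_def
  have ha2 : a^2 = dp - x := Real.sq_sqrt hu0
  have hb2 : b^2 = x - dm := Real.sq_sqrt (by linarith)
  have ha0 : 0 ≤ a := Real.sqrt_nonneg _
  have hb0 : 0 ≤ b := Real.sqrt_nonneg _
  have hbsD : b ≤ sD := by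
    have h1 : b ≤ Real.sqrt (4*sl) := Real.sqrt_le_sqrt (by linarith)
    have h2 : Real.sqrt (4*sl) = sD := by
      rw [← hsD2, Real.sqrt_sq hsD.le]
    linarith
  have hpm0 : pMP l x = a * b / (2*π*l*x) := by
    show Real.sqrt ((dp - x) * (x - dm)) / (2*π*l*x) = a * b / (2*π*l*x)
    rw [Real.sqrt_mul hu0]
  have h1 : (b*dp - sD*x)*(b+sD) = (dp - x)*(b*sD - dm) := by
    linear_combination dp*hb2 - x*hsD2 + x*hD
  have hbsDsq : b*sD ≤ 4*sl := by
    have := mul_le_mul_of_nonneg_right hbsD hsD.le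
    nlinarith
  have hkey : |b*dp - sD*x| * sD ≤ (dp - x) * dp := by
    have h2 : |b*sD - dm| ≤ dp := by
      rw [abs_le]
      constructor
      · nlinarith [mul_nonneg hb0 hsD.le]
      · linarith
    have h3 : |b*dp - sD*x| * (b+sD) ≤ (dp - x) * dp := by
      calc |b*dp - sD*x| * (b+sD) = |(b*dp - sD*x)*(b+sD)| := by
            rw [abs_mul, abs_of_nonneg (by linarith : (0:ℝ) ≤ b + sD)]
      _ = (dp - x) * |b*sD - dm| := by rw [h1, abs_mul, abs_of_nonneg hu0]
      _ ≤ (dp - x) * dp := mul_le_mul_of_nonneg_left h2 hu0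
    calc |b*dp - sD*x| * sD ≤ |b*dp - sD*x| * (b+sD) := by
          apply mul_le_mul_of_nonneg_left (by linarith) (abs_nonneg _)
    _ ≤ (dp - x) * dp := h3
  have hdiff : pMP l x - sD/(2*π*l*dp) * a = a * (b*dp - sD*x) / (2*π*l*x*dp) := by
    rw [hpm0]
    field_simp
  rw [hdiff, abs_div, abs_mul, abs_of_nonneg ha0,
    abs_of_nonneg (by positivity : (0:ℝ) ≤ 2*π*l*x*dp),
    div_le_iff₀ (by positivity : (0:ℝ) < 2*π*l*x*dp)]
  have hRHS : 1/(2*π*l*sD) * ((dp-x)*a) * (2*π*l*x*dp) = (dp-x)*a*x*dp/sD := by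
    field_simp
  rw [hRHS, le_div_iff₀ hsD]
  have step1 : a * |b*dp - sD*x| * sD ≤ a * ((dp-x)*dp) := by
    calc a * |b*dp - sD*x| * sD = a * (|b*dp - sD*x| * sD) := by ring
    _ ≤ a * ((dp-x)*dp) := mul_le_mul_of_nonneg_left hkey ha0
  have step2 : a * ((dp-x)*dp) ≤ (dp-x)*a*x*dp := by
    have h4 : (0:ℝ) ≤ (dp-x)*a*dp := by positivity
    calc a * ((dp-x)*dp) = ((dp-x)*a*dp)*1 := by ring
    _ ≤ ((dp-x)*a*dp)*x := mul_le_mul_of_nonneg_left hx1 h4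
    _ = (dp-x)*a*x*dp := by ring
  linarith

lemma pMP_nonneg (l x : ℝ) (hl0 : 0 < l) (hx : 0 ≤ x) : 0 ≤ pMP l x := by
  have hpi := Real.pi_pos
  apply div_nonneg (Real.sqrt_nonneg _)
  positivity

lemma mp_integrable (l a b : ℝ) (hl0 : 0 < l) (ha : 0 < a) (hb : 0 < b) :
    IntervalIntegrable (fun x => pMP l x) MeasureTheory.volume a b := by
  apply ContinuousOn.intervalIntegrable
  have : (fun x => pMP l x) = fun x =>
      Real.sqrt (((1 + Real.sqrt l)^2 - x) * (x - (1 - Real.sqrt l)^2)) / (2*π*l*x) := rfl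
  rw [this]
  apply ContinuousOn.div
  · exact (Real.continuous_sqrt.comp (by continuity)).continuousOn
  · exact (by continuity : Continuous fun x : ℝ => 2*π*l*x).continuousOn
  · intro x hx
    have hpi := Real.pi_pos
    rcases Set.mem_uIcc.1 hx with ⟨hh1, _⟩ | ⟨hh1, _⟩ <;>
      [have hx0 : 0 < x := lt_of_lt_of_le ha hh1;
       have hx0 : 0 < x := lt_of_lt_of_le hb hh1] <;> positivity

lemma mp_estimate (l sD : ℝ) (hl0 : 0 < l) (hsl1 : Real.sqrt l ≤ 1)
    (hsD : 0 < sD) (hsD2 : sD^2 = 4*Real.sqrt l) (g : ℝ)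
    (hg1 : 1 ≤ g) (hg2 : g ≤ (1 + Real.sqrt l)^2) :
    |(∫ x in g..((1 + Real.sqrt l)^2), pMP l x) -
        (sD/(3*π*l*(1 + Real.sqrt l)^2)) *
          (((1 + Real.sqrt l)^2 - g) * Real.sqrt ((1 + Real.sqrt l)^2 - g))|
      ≤ (1/(2*π*l*sD)) *
          (((1 + Real.sqrt l)^2 - g)^2 * Real.sqrt ((1 + Real.sqrt l)^2 - g)) := by
  have hpi := Real.pi_pos
  set sl := Real.sqrt l with hsl_def
  set dp := (1 + sl)^2 with hdp_def
  have hdp0 : (0:ℝ) < dp := by positivity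
  have hg0 : (0:ℝ) < g := by linarith
  set h0 := sD/(2*π*l*dp) with hh0_def
  set K := sD/(3*π*l*dp) with hK_def
  set L := (1:ℝ)/(2*π*l*sD) with hL_def
  have hI1 : IntervalIntegrable (fun x => pMP l x) MeasureTheory.volume g dp :=
    mp_integrable l g dp hl0 hg0 hdp0
  have hI2 : IntervalIntegrable (fun x => h0 * Real.sqrt (dp - x)) MeasureTheory.volume g dp :=
    (by continuity : Continuous fun x : ℝ => h0 * Real.sqrt (dp - x)).intervalIntegrable _ _
  have hI3 : IntervalIntegrable (fun x => L * ((dp - x) * Real.sqrt (dp - x)))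
      MeasureTheory.volume g dp :=
    (by continuity : Continuous fun x : ℝ => L * ((dp - x) * Real.sqrt (dp - x))).intervalIntegrable _ _
  have e1 : ∫ x in g..dp, h0 * Real.sqrt (dp - x) = K * ((dp-g) * Real.sqrt (dp-g)) := by
    rw [intervalIntegral.integral_const_mul, integral_sqrt_sub g dp hg2, hh0_def, hK_def]
    field_simp
  have e2 : (∫ x in g..dp, pMP l x) - K * ((dp-g)*Real.sqrt (dp-g)) =
      ∫ x in g..dp, (pMP l x - h0 * Real.sqrt (dp - x)) := by
    rw [intervalIntegral.integral_sub hI1 hI2, e1]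
  rw [e2]
  calc |∫ x in g..dp, (pMP l x - h0*Real.sqrt (dp-x))|
      ≤ ∫ x in g..dp, |pMP l x - h0*Real.sqrt (dp-x)| :=
        intervalIntegral.abs_integral_le_integral_abs hg2
  _ ≤ ∫ x in g..dp, L * ((dp-x)*Real.sqrt (dp-x)) := by
      apply intervalIntegral.integral_mono_on hg2 ((hI1.sub hI2).abs) hI3
      intro x hx
      exact mp_pointwise l sD x hl0 hsl1 hsD hsD2 (le_trans hg1 hx.1) hx.2
  _ = L * (2/5 * ((dp-g)^2 * Real.sqrt (dp-g))) := by
      rw [intervalIntegral.integral_const_mul, integral_mul_sqrt_sub g dp hg2]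
  _ ≤ L * ((dp-g)^2 * Real.sqrt (dp-g)) := by
      have hL0 : 0 ≤ L := by rw [hL_def]; positivity
      have h5 : (0:ℝ) ≤ (dp-g)^2 * Real.sqrt (dp-g) :=
        mul_nonneg (sq_nonneg _) (Real.sqrt_nonneg _)
      nlinarith [mul_nonneg hL0 h5]

lemma invert_aux (K L t s r : ℝ) (hK : 0 < K) (hL : 0 < L) (hs : 0 < s) (hr : 0 ≤ r)
    (hLs : L * s ≤ K/2)
    (hest : |t - K*(s*Real.sqrt s)| ≤ L*(s^2*Real.sqrt s))
    (hrr : r * Real.sqrt r = t / K) :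
    |r - s| ≤ (2*L/K) * ((2/K)^((4:ℝ)/3)) * t^((4:ℝ)/3) := by
  have hsq : 0 < Real.sqrt s := Real.sqrt_pos.2 hs
  have hss : 0 < s * Real.sqrt s := by positivity
  have ht : K/2*(s*Real.sqrt s) ≤ t := by
    have h1 := (abs_le.1 hest).1
    have h2 : L*(s^2*Real.sqrt s) = (L*s)*(s*Real.sqrt s) := by ring
    nlinarith [mul_le_mul_of_nonneg_right hLs hss.le]
  have ht0 : 0 < t := lt_of_lt_of_le (by positivity) ht
  have h5 : |r*Real.sqrt r - s*Real.sqrt s| ≤ (L/K)*(s^2*Real.sqrt s) := by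
    rw [hrr, show t/K - s*Real.sqrt s = (t - K*(s*Real.sqrt s))/K by field_simp,
      abs_div, abs_of_pos hK, div_le_iff₀ hK]
    calc |t - K*(s*Real.sqrt s)| ≤ L*(s^2*Real.sqrt s) := hest
    _ = L/K*(s^2*Real.sqrt s)*K := by field_simp
  have h7 : |r - s| ≤ (2*L/K)*s^2 := by
    rw [← mul_le_mul_iff_right₀ hsq]
    calc Real.sqrt s * |r - s| ≤ 2*|r*Real.sqrt r - s*Real.sqrt s| :=
          cube_abs_aux r s hr hs.le
    _ ≤ 2*((L/K)*(s^2*Real.sqrt s)) := by linarith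
    _ = Real.sqrt s * ((2*L/K)*s^2) := by ring
  have h8 : s*Real.sqrt s ≤ 2*t/K := by
    rw [le_div_iff₀ hK]; linarith
  have h9 : s ≤ (2*t/K) ^ ((2:ℝ)/3) := by
    have e : (s*Real.sqrt s) ^ ((2:ℝ)/3) = s := by
      rw [← rpow_three_halves s hs.le, ← Real.rpow_mul hs.le]
      norm_num
    calc s = (s*Real.sqrt s) ^ ((2:ℝ)/3) := e.symm
    _ ≤ (2*t/K) ^ ((2:ℝ)/3) := Real.rpow_le_rpow (by positivity) h8 (by norm_num)
  have h10 : s^2 ≤ (2/K)^((4:ℝ)/3) * t^((4:ℝ)/3) := by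
    have e1 : ((2*t/K)^((2:ℝ)/3))^(2:ℕ) = (2/K)^((4:ℝ)/3)*t^((4:ℝ)/3) := by
      rw [← Real.rpow_natCast ((2*t/K)^((2:ℝ)/3)) 2, ← Real.rpow_mul (by positivity)]
      rw [show (2:ℝ)/3*((2:ℕ):ℝ) = (4:ℝ)/3 by norm_num]
      rw [show 2*t/K = (2/K)*t by ring, Real.mul_rpow (by positivity) ht0.le]
    calc s^2 ≤ ((2*t/K)^((2:ℝ)/3))^(2:ℕ) := by
          apply pow_le_pow_left₀ hs.le h9
    _ = (2/K)^((4:ℝ)/3)*t^((4:ℝ)/3) := e1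
  calc |r - s| ≤ (2*L/K)*s^2 := h7
  _ ≤ (2*L/K)*((2/K)^((4:ℝ)/3)*t^((4:ℝ)/3)) := by
      apply mul_le_mul_of_nonneg_left h10 (by positivity)
  _ = (2*L/K) * ((2/K)^((4:ℝ)/3)) * t^((4:ℝ)/3) := by ring

set_option maxHeartbeats 1000000 in
/-- the classical locations `g_i`, defined by
`i/n = ∫_{g_i}^{d₊} p(x) dx`, satisfy uniformly for `i ≤ n/2`
`g_i = d₊ - (3πλ^{3/4}d₊ i/(2n))^{2/3} + O((i/n)^{4/3})`. -/
theorem classical_location_asymptotics (l : ℝ) (hl0 : 0 < l) (hl1 : l ≤ 1) :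
    ∃ C : ℝ, 0 < C ∧ ∀ (n i : ℕ), 1 ≤ i → 2 * i ≤ n → ∀ g : ℝ,
      (1 - Real.sqrt l) ^ 2 < g → g < (1 + Real.sqrt l) ^ 2 →
      (i : ℝ) / n = (∫ x in g..((1 + Real.sqrt l) ^ 2), pMP l x) →
      |g - ((1 + Real.sqrt l) ^ 2 -
          (3 * Real.pi * l ^ ((3 : ℝ) / 4) * (1 + Real.sqrt l) ^ 2 * i /
            (2 * n)) ^ ((2 : ℝ) / 3))|
        ≤ C * ((i : ℝ) / n) ^ ((4 : ℝ) / 3) := by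
  have hpi := Real.pi_pos
  have hsl : 0 < Real.sqrt l := Real.sqrt_pos.2 hl0
  have hsl2 : Real.sqrt l ^ 2 = l := Real.sq_sqrt hl0.le
  have hsl1 : Real.sqrt l ≤ 1 := Real.sqrt_le_one.2 hl1
  set dp := (1 + Real.sqrt l)^2 with hdp_def
  set dm := (1 - Real.sqrt l)^2 with hdm_def
  have hdp0 : (0:ℝ) < dp := by rw [hdp_def]; positivity
  have hdp1 : (1:ℝ) ≤ dp := by
    rw [hdp_def]; linarith [hsl.le, sq_nonneg (Real.sqrt l)]
  have hdm0 : (0:ℝ) ≤ dm := sq_nonneg _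
  have hD : dp - dm = 4*Real.sqrt l := by rw [hdp_def, hdm_def]; ring
  have hdp2sl : dp - 2*Real.sqrt l = 1 + l := by
    rw [hdp_def]; linear_combination hsl2
  set sD := Real.sqrt (4*Real.sqrt l) with hsD_def
  have hsD : 0 < sD := Real.sqrt_pos.2 (by positivity)
  have hsD2 : sD^2 = 4*Real.sqrt l := Real.sq_sqrt (by positivity)
  set K := sD/(3*π*l*dp) with hK_def
  set L := (1:ℝ)/(2*π*l*sD) with hL_def
  have hK : 0 < K := by rw [hK_def]; positivity
  have hL : 0 < L := by rw [hL_def]; positivity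
  set s0 := min (2*Real.sqrt l) (K/(2*L)) with hs0_def
  have hs0 : 0 < s0 := lt_min (by positivity) (by positivity)
  have hs0a : s0 ≤ 2*Real.sqrt l := min_le_left _ _
  have hLs0 : L * s0 ≤ K/2 := by
    have h1 : s0 ≤ K/(2*L) := min_le_right _ _
    calc L * s0 ≤ L * (K/(2*L)) := mul_le_mul_of_nonneg_left h1 hL.le
    _ = K/2 := by field_simp
  set c := 3*π*l^((3:ℝ)/4)*dp/2 with hc_def
  have hc : 0 < c := by rw [hc_def]; positivity
  have hsD' : sD = 2 * l^((1:ℝ)/4) := by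
    rw [hsD_def, show (4:ℝ) = 2^2 by norm_num, Real.sqrt_mul (by positivity) _,
      Real.sqrt_sq (by norm_num : (0:ℝ) ≤ 2), Real.sqrt_eq_rpow (Real.sqrt l),
      Real.sqrt_eq_rpow l, ← Real.rpow_mul hl0.le]
    norm_num
  have hcK : c * K = 1 := by
    rw [hc_def, hK_def, hsD']
    have h34 : l^((3:ℝ)/4) * l^((1:ℝ)/4) = l := by
      rw [← Real.rpow_add hl0]; norm_num
    field_simp
    linear_combination h34
  set t0 := K/2 * (s0 * Real.sqrt s0) with ht0_def
  have hsqs0 : 0 < Real.sqrt s0 := Real.sqrt_pos.2 hs0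
  have ht0 : 0 < t0 := by rw [ht0_def]; positivity
  set C1 := (2*L/K) * ((2/K)^((4:ℝ)/3)) with hC1_def
  set C2 := (dp + (c/2)^((2:ℝ)/3)) / (t0^((4:ℝ)/3)) with hC2_def
  have hC1 : 0 < C1 := by rw [hC1_def]; positivity
  have hC2 : 0 < C2 := by rw [hC2_def]; positivity
  refine ⟨max 1 (max C1 C2), lt_of_lt_of_le one_pos (le_max_left _ _), ?_⟩
  intro n i hi hin g hgdm hgdp heq
  have hn2 : 2 ≤ n := by omega
  have hn0 : (0:ℝ) < n := by
    have : (2:ℝ) ≤ n := by exact_mod_cast hn2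
    linarith
  have hi0 : (0:ℝ) < i := by
    have : (1:ℝ) ≤ i := by exact_mod_cast hi
    linarith
  have hin' : 2*(i:ℝ) ≤ n := by exact_mod_cast hin
  set t := (i:ℝ)/n with ht_def
  have ht0' : 0 < t := div_pos hi0 hn0
  have ht12 : t ≤ 1/2 := by rw [ht_def, div_le_iff₀ hn0]; linarith
  have hct0 : 0 < c * t := mul_pos hc ht0'
  have hgoal_arg : 3*π*l^((3:ℝ)/4)*dp*(i:ℝ)/(2*(n:ℝ)) = c * t := by
    rw [hc_def, ht_def]; field_simp
  rw [hgoal_arg]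
  set r := (c*t) ^ ((2:ℝ)/3) with hr_def
  have hr0 : 0 < r := Real.rpow_pos_of_pos hct0 _
  have hrr : r * Real.sqrt r = t / K := by
    have h1 : (c*t) ^ ((2:ℝ)/3 * (3/2)) = r * Real.sqrt r := by
      rw [Real.rpow_mul hct0.le, ← hr_def, rpow_three_halves r hr0.le]
    have h2 : c * t = t / K := by
      rw [eq_div_iff hK.ne']
      linear_combination t * hcK
    rw [← h1, show (2:ℝ)/3 * (3/2) = 1 by norm_num, Real.rpow_one, h2]
  set s := dp - g with hs_def
  have hsg : 0 < s := by rw [hs_def]; linarith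
  have hg0 : 0 < g := lt_of_le_of_lt hdm0 hgdm
  rw [show g - (dp - r) = r - s by rw [hs_def]; ring]
  have ht43 : (0:ℝ) < t ^ ((4:ℝ)/3) := Real.rpow_pos_of_pos ht0' _
  rcases le_or_gt s s0 with hcase | hcase
  · -- case A : s ≤ s0
    have hg1 : (1:ℝ) ≤ g := by
      have : dp - 2*Real.sqrt l ≤ g := by
        have : s ≤ 2*Real.sqrt l := le_trans hcase hs0a
        rw [hs_def] at this; linarith
      linarith [hl0.le, hdp2sl]
    have hA := mp_estimate l sD hl0 hsl1 hsD hsD2 g hg1 hgdp.le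
    rw [← hdp_def, ← hK_def, ← hL_def, ← hs_def, ← heq] at hA
    have hLs : L * s ≤ K/2 :=
      le_trans (mul_le_mul_of_nonneg_left hcase hL.le) hLs0
    have hmain := invert_aux K L t s r hK hL hsg hr0.le hLs hA hrr
    calc |r - s| ≤ (2*L/K) * ((2/K)^((4:ℝ)/3)) * t^((4:ℝ)/3) := hmain
    _ = C1 * t^((4:ℝ)/3) := by rw [hC1_def]
    _ ≤ max 1 (max C1 C2) * t^((4:ℝ)/3) := by
        apply mul_le_mul_of_nonneg_right _ ht43.le
        exact le_trans (le_max_left _ _) (le_max_right _ _)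
  · -- case B : s0 < s
    have hg01 : (1:ℝ) ≤ dp - s0 := by linarith [hs0a, hdp2sl, hl0.le]
    have hB := mp_estimate l sD hl0 hsl1 hsD hsD2 (dp - s0) hg01 (by linarith)
    rw [← hdp_def, ← hK_def, ← hL_def] at hB
    rw [show dp - (dp - s0) = s0 by ring] at hB
    have hFg0 : t0 ≤ ∫ x in (dp - s0)..dp, pMP l x := by
      have h1 := (abs_le.1 hB).1
      have h2 : L*(s0^2*Real.sqrt s0) ≤ K/2*(s0*Real.sqrt s0) := by
        have e : L*(s0^2*Real.sqrt s0) = (L*s0)*(s0*Real.sqrt s0) := by ring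
        rw [e]
        apply mul_le_mul_of_nonneg_right hLs0 (by positivity)
      rw [ht0_def]; linarith
    have hgg0 : g ≤ dp - s0 := by
      rw [hs_def] at hcase; linarith
    have hsplit : (∫ x in g..dp, pMP l x) =
        (∫ x in g..(dp - s0), pMP l x) + ∫ x in (dp - s0)..dp, pMP l x :=
      (intervalIntegral.integral_add_adjacent_intervals
        (mp_integrable l g (dp - s0) hl0 hg0 (by linarith))
        (mp_integrable l (dp - s0) dp hl0 (by linarith) hdp0)).symm
    have hnn : 0 ≤ ∫ x in g..(dp - s0), pMP l x := by
      apply intervalIntegral.integral_nonneg hgg0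
      intro x hx
      exact pMP_nonneg l x hl0 (by linarith [hx.1])
    have htt0 : t0 ≤ t := by
      rw [heq, hsplit]; linarith
    have hr_le : r ≤ (c/2)^((2:ℝ)/3) := by
      rw [hr_def]
      apply Real.rpow_le_rpow hct0.le _ (by norm_num)
      have h6 := mul_le_mul_of_nonneg_left ht12 hc.le
      linarith
    have hs_le : s ≤ dp := by rw [hs_def]; linarith
    have hR0 : (0:ℝ) ≤ (c/2)^((2:ℝ)/3) := Real.rpow_nonneg (by positivity) _
    have hlhs : |r - s| ≤ dp + (c/2)^((2:ℝ)/3) := by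
      rw [abs_le]
      constructor
      · linarith [hr0.le, hs_le, hR0]
      · linarith [hr_le, hsg.le]
    have hkey : C2 * t0^((4:ℝ)/3) = dp + (c/2)^((2:ℝ)/3) := by
      rw [hC2_def]
      field_simp
    have ht0_43 : t0^((4:ℝ)/3) ≤ t^((4:ℝ)/3) :=
      Real.rpow_le_rpow ht0.le htt0 (by norm_num)
    calc |r - s| ≤ dp + (c/2)^((2:ℝ)/3) := hlhs
    _ = C2 * t0^((4:ℝ)/3) := hkey.symm
    _ ≤ C2 * t^((4:ℝ)/3) := mul_le_mul_of_nonneg_left ht0_43 hC2.le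
    _ ≤ max 1 (max C1 C2) * t^((4:ℝ)/3) := by
        apply mul_le_mul_of_nonneg_right _ ht43.le
        exact le_trans (le_max_right _ _) (le_max_right _ _)
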